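/- Let G be a digraph on n vertices with minimum out-degree δn where δ > 2/3, and let x be a vertex with in-degree greater than 2(1−δ)n. Then any two out-neighbours y, y' of x are weakly 1-connected: there exists a vertex z, an out-neighbour of both y and y' and an in-neighbour of x, such that both {x,y,z} and {x,y',z} are triples with complete base graph in which every vertex has out-degree at least 1. -/
import Mathlib


/-- `S ∈ K_{3,1}(G)`: three vertices, each pair joined by a directed edge, each vertex
with an out-neighbour inside `S`. -/
def K31 {n : ℕ} (G : Fin n → Fin n → Prop) (S : Finset (Fin n)) : Prop :=
  S.card = 3 ∧ (∀ x ∈ S, ∀ y ∈ S, x ≠ y → G x y ∨ G y x) ∧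
    (∀ x ∈ S, ∃ y ∈ S, G x y)

lemma k31_cycle {n : ℕ} (G : Fin n → Fin n → Prop) (a b c : Fin n)
    (hab : a ≠ b) (hac : a ≠ c) (hbc : b ≠ c)
    (h1 : G a b) (h2 : G b c) (h3 : G c a) : K31 G {a, b, c} := by
  refine ⟨?_, ?_, ?_⟩
  · rw [Finset.card_insert_of_notMem (by simp [hab, hac]),
      Finset.card_insert_of_notMem (by simp [hbc])]
    simp
  · intro u hu v hv huv
    simp only [Finset.mem_insert, Finset.mem_singleton] at hu hv
    rcases hu with rfl | rfl | rfl <;> rcases hv with rfl | rfl | rfl <;>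
      first | exact absurd rfl huv | tauto
  · intro u hu
    simp only [Finset.mem_insert, Finset.mem_singleton] at hu
    rcases hu with rfl | rfl | rfl
    · exact ⟨b, by simp, h1⟩
    · exact ⟨c, by simp, h2⟩
    · exact ⟨a, by simp, h3⟩

/-- If `δ⁺(G) ≥ δn` with `δ > 2/3` and `d⁻(x) > 2(1-δ)n`, then any two out-neighbours
`y, y'` of `x` are weakly 1-connected via a common vertex `z`. -/
theorem stmt_14 (n : ℕ) (δ : ℝ) (hδ : 2 / 3 < δ) (G : Fin n → Fin n → Prop)
    (hirr : ∀ v, ¬ G v v)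
    (hdeg : ∀ v : Fin n, δ * n ≤ (Set.ncard {w | G v w} : ℝ))
    (x : Fin n) (hx : 2 * (1 - δ) * n < (Set.ncard {w | G w x} : ℝ))
    (y y' : Fin n) (hy : G x y) (hy' : G x y') :
    ∃ z : Fin n, G y z ∧ G y' z ∧ G z x ∧ K31 G {x, y, z} ∧ K31 G {x, y', z} := by
  classical
  set A := {w : Fin n | G y w} with hA
  set B := {w : Fin n | G y' w} with hB
  set C := {w : Fin n | G w x} with hC
  have hU : ∀ S : Set (Fin n), S.ncard ≤ n := by
    intro S
    have := Set.ncard_le_ncard (Set.subset_univ S) Set.finite_univ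
    simpa [Set.ncard_univ] using this
  have h1 : A.ncard + B.ncard ≤ n + (A ∩ B).ncard := by
    have h := Set.ncard_union_add_ncard_inter A B
    have := hU (A ∪ B); omega
  have h2 : (A ∩ B).ncard + C.ncard ≤ n + (A ∩ B ∩ C).ncard := by
    have h := Set.ncard_union_add_ncard_inter (A ∩ B) C
    have := hU (A ∩ B ∪ C); omega
  have hpos : (A ∩ B ∩ C).ncard ≠ 0 := by
    intro h0
    have hle : A.ncard + B.ncard + C.ncard ≤ 2 * n := by omega
    have hleR : (A.ncard : ℝ) + B.ncard + C.ncard ≤ 2 * n := by exact_mod_cast hle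
    nlinarith [hdeg y, hdeg y', hx]
  obtain ⟨z, hz⟩ := Set.nonempty_of_ncard_ne_zero hpos
  obtain ⟨⟨hzA, hzB⟩, hzC⟩ := hz
  have hyz : G y z := hzA
  have hy'z : G y' z := hzB
  have hzx : G z x := hzC
  have hxy : x ≠ y := fun h => hirr x (h ▸ hy)
  have hxy' : x ≠ y' := fun h => hirr x (h ▸ hy')
  have hxz : x ≠ z := fun h => hirr x (h ▸ hzx)
  have hyz' : y ≠ z := fun h => hirr y (h ▸ hyz)
  have hy'z' : y' ≠ z := fun h => hirr y' (h ▸ hy'z)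
  exact ⟨z, hyz, hy'z, hzx,
    k31_cycle G x y z hxy hxz hyz' hy hyz hzx,
    k31_cycle G x y' z hxy' hxz hy'z' hy' hy'z hzx⟩
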